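/- For every T > 0, the kernel k(t) = ∫₀¹ t^{-α} μ(α)/Γ(1-α) dα belongs to L¹(0,T), and moreover ∫₀ᵀ k(t) dt = ∫₀¹ T^{1-α} μ(α)/Γ(2-α) dα ≤ 2 max{1,T} ∫₀¹ μ(α) dα. -/

import Mathlib

open MeasureTheory Real Set

set_option maxHeartbeats 1000000

/-- For every `T > 0`, the kernel `k(t) = ∫₀¹ t^{-α} μ(α)/Γ(1-α) dα`
belongs to `L¹(0,T)`, and `∫₀ᵀ k(t) dt = ∫₀¹ T^{1-α} μ(α)/Γ(2-α) dα
≤ 2 max{1,T} ∫₀¹ μ(α) dα`. -/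
theorem stmt_0 (μ : ℝ → ℝ)
    (hμ_int : IntegrableOn μ (Ioo 0 1))
    (hμ_nonneg : ∀ α ∈ Ioo (0:ℝ) 1, 0 ≤ μ α)
    (hμ_ne : ¬ (∀ᵐ α ∂(volume.restrict (Ioo (0:ℝ) 1)), μ α = 0))
    (k : ℝ → ℝ)
    (hk : ∀ t : ℝ, 0 < t → k t = ∫ α in Ioo (0:ℝ) 1, t ^ (-α) * μ α / Real.Gamma (1 - α))
    (T : ℝ) (hT : 0 < T) :
    IntegrableOn k (Ioo 0 T) ∧
    (∫ t in Ioo (0:ℝ) T, k t) = (∫ α in Ioo (0:ℝ) 1, T ^ (1 - α) * μ α / Real.Gamma (2 - α)) ∧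
    (∫ α in Ioo (0:ℝ) 1, T ^ (1 - α) * μ α / Real.Gamma (2 - α)) ≤
      2 * max 1 T * ∫ α in Ioo (0:ℝ) 1, μ α := by
  set ν₁ := volume.restrict (Ioo (0:ℝ) T) with hν₁
  set ν₂ := volume.restrict (Ioo (0:ℝ) 1) with hν₂
  set F : ℝ × ℝ → ℝ := fun p => p.1 ^ (-p.2) * (μ p.2 / Real.Gamma (1 - p.2)) with hF
  -- basic Gamma facts
  have hΓ1 : ∀ α ∈ Ioo (0:ℝ) 1, 0 < Real.Gamma (1 - α) := fun α hα =>
    Real.Gamma_pos_of_pos (by linarith [hα.2])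
  have hΓ2 : ∀ α ∈ Ioo (0:ℝ) 1, Real.Gamma (2 - α) = (1 - α) * Real.Gamma (1 - α) := by
    intro α hα
    rw [show (2:ℝ) - α = (1 - α) + 1 by ring, Real.Gamma_add_one (by linarith [hα.2])]
  have hΓ3 : ∀ α ∈ Ioo (0:ℝ) 1, (1:ℝ)/2 ≤ Real.Gamma (2 - α) := by
    intro α hα
    obtain ⟨h0, h1⟩ := hα
    have h2 : Real.Gamma (3 - α) = (2 - α) * Real.Gamma (2 - α) := by
      rw [show (3:ℝ) - α = (2 - α) + 1 by ring, Real.Gamma_add_one (by linarith)]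
    have h3 : (1:ℝ) < Real.Gamma (3 - α) := by
      have := Real.Gamma_strictMonoOn_Ici (le_refl (2:ℝ))
        (by simp; linarith : (3:ℝ) - α ∈ Ici (2:ℝ)) (by linarith)
      rwa [Real.Gamma_two] at this
    have h4 : 0 < Real.Gamma (2 - α) := Real.Gamma_pos_of_pos (by linarith)
    nlinarith
  have hTmax : ∀ α ∈ Ioo (0:ℝ) 1, T ^ (1 - α) ≤ max 1 T := by
    intro α hα
    rcases le_total T 1 with h | h
    · exact le_trans (Real.rpow_le_one hT.le h (by linarith [hα.2])) (le_max_left _ _)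
    · calc T ^ (1 - α) ≤ T ^ (1:ℝ) :=
            Real.rpow_le_rpow_of_exponent_le h (by linarith [hα.1])
        _ = T := Real.rpow_one T
        _ ≤ max 1 T := le_max_right _ _
  -- integrability and value of the inner t-integral
  have hIt : ∀ α ∈ Ioo (0:ℝ) 1, IntegrableOn (fun t : ℝ => t ^ (-α)) (Ioo 0 T) := by
    intro α hα
    exact (intervalIntegral.integrableOn_Ioo_rpow_iff hT).2 (by linarith [hα.2])
  have hItv : ∀ α ∈ Ioo (0:ℝ) 1, (∫ t in Ioo (0:ℝ) T, t ^ (-α)) = T ^ (1 - α) / (1 - α) := by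
    intro α hα
    rw [← integral_Ioc_eq_integral_Ioo, ← intervalIntegral.integral_of_le hT.le,
      integral_rpow (Or.inl (by linarith [hα.2]))]
    rw [Real.zero_rpow (by linarith [hα.2] : -α + 1 ≠ 0)]
    ring_nf
  -- value of the inner integral of F
  have hval : ∀ α ∈ Ioo (0:ℝ) 1,
      (∫ t in Ioo (0:ℝ) T, t ^ (-α) * (μ α / Real.Gamma (1 - α)))
        = T ^ (1 - α) * μ α / Real.Gamma (2 - α) := by
    intro α hα
    rw [integral_mul_const, hItv α hα, hΓ2 α hα]
    have h1 : (1:ℝ) - α ≠ 0 := by linarith [hα.2]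
    have h2 : Real.Gamma (1 - α) ≠ 0 := (hΓ1 α hα).ne'
    field_simp
  -- nonnegativity of F on the relevant set
  have hFnn : ∀ α ∈ Ioo (0:ℝ) 1, ∀ t ∈ Ioo (0:ℝ) T, 0 ≤ F (t, α) := by
    intro α hα t ht
    have h1 := hμ_nonneg α hα
    have h2 := (hΓ1 α hα).le
    have h3 : (0:ℝ) ≤ t ^ (-α) := Real.rpow_nonneg ht.1.le _
    simp only [hF]
    exact mul_nonneg h3 (div_nonneg h1 h2)
  -- measurability of F
  have hFm : AEStronglyMeasurable F (ν₁.prod ν₂) := by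
    have hm1 : Measurable fun p : ℝ × ℝ => p.1 ^ (-p.2) :=
      measurable_fst.pow measurable_snd.neg
    have hΓcont : ContinuousOn (fun α : ℝ => Real.Gamma (1 - α)) (Ioo 0 1) := by
      intro α hα
      refine ContinuousAt.continuousWithinAt ?_
      have hd : ∀ m : ℕ, (1 - α) ≠ -(m : ℝ) := by
        intro m
        have : (0:ℝ) < 1 - α := by linarith [hα.2]
        have h2 : -(m:ℝ) ≤ 0 := neg_nonpos.mpr (Nat.cast_nonneg m)
        linarith
      have hc : ContinuousAt Real.Gamma (1 - α) :=
        (Real.differentiableAt_Gamma hd).continuousAt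
      exact hc.comp (continuousAt_const.sub continuousAt_id)
    have hg : AEStronglyMeasurable (fun α : ℝ => μ α / Real.Gamma (1 - α)) ν₂ := by
      have h1 := hμ_int.aestronglyMeasurable
      have h2 : AEStronglyMeasurable (fun α : ℝ => Real.Gamma (1 - α))
          (volume.restrict (Ioo (0:ℝ) 1)) :=
        (hΓcont.aemeasurable measurableSet_Ioo).aestronglyMeasurable
      exact (h1.aemeasurable.div h2.aemeasurable).aestronglyMeasurable
    exact hm1.aestronglyMeasurable.mul hg.comp_snd
  -- norm of the inner integral
  have hnormval : ∀ α ∈ Ioo (0:ℝ) 1,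
      (∫ t, ‖F (t, α)‖ ∂ν₁) = T ^ (1 - α) * μ α / Real.Gamma (2 - α) := by
    intro α hα
    rw [hν₁]
    rw [setIntegral_congr_fun measurableSet_Ioo
      (fun t ht => by rw [Real.norm_eq_abs, abs_of_nonneg (hFnn α hα t ht)])]
    exact hval α hα
  -- bound on the value
  have hvb : ∀ α ∈ Ioo (0:ℝ) 1,
      T ^ (1 - α) * μ α / Real.Gamma (2 - α) ≤ 2 * max 1 T * μ α := by
    intro α hα
    have h1 := hΓ3 α hα
    have h2 := hTmax α hα
    have h3 := hμ_nonneg α hα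
    have h4 : (0:ℝ) < Real.Gamma (2 - α) := Real.Gamma_pos_of_pos (by linarith [hα.2])
    rw [div_le_iff₀ h4]
    have h5 : (0:ℝ) ≤ T ^ (1 - α) := Real.rpow_nonneg hT.le _
    have h6 : (0:ℝ) ≤ max 1 T := le_trans zero_le_one (le_max_left 1 T)
    nlinarith [mul_le_mul_of_nonneg_right h2 h3,
      mul_nonneg (mul_nonneg h6 h3) (by linarith : (0:ℝ) ≤ 2 * Real.Gamma (2 - α) - 1)]
  have hvnn : ∀ α ∈ Ioo (0:ℝ) 1, 0 ≤ T ^ (1 - α) * μ α / Real.Gamma (2 - α) := by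
    intro α hα
    have h4 : (0:ℝ) < Real.Gamma (2 - α) := Real.Gamma_pos_of_pos (by linarith [hα.2])
    have h5 : (0:ℝ) ≤ T ^ (1 - α) := Real.rpow_nonneg hT.le _
    have := hμ_nonneg α hα
    positivity
  -- integrability of F on the product
  have hF_int : Integrable F (ν₁.prod ν₂) := by
    rw [integrable_prod_iff' hFm]
    constructor
    · filter_upwards [ae_restrict_mem measurableSet_Ioo] with α hα
      have : IntegrableOn (fun t : ℝ => t ^ (-α) * (μ α / Real.Gamma (1 - α))) (Ioo 0 T) :=
        (hIt α hα).mul_const _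
      exact this
    · have hms : AEStronglyMeasurable (fun α : ℝ => ∫ t, ‖F (t, α)‖ ∂ν₁) ν₂ :=
        hFm.norm.prod_swap.integral_prod_right'
      refine Integrable.mono' ((hμ_int.const_mul (2 * max 1 T)).abs) hms ?_
      filter_upwards [ae_restrict_mem measurableSet_Ioo] with α hα
      rw [Real.norm_eq_abs, hnormval α hα, abs_of_nonneg (hvnn α hα)]
      exact le_trans (hvb α hα) (le_abs_self _)
  -- k agrees a.e. with the inner integral of F
  have hk_ae : (fun t => ∫ α, F (t, α) ∂ν₂) =ᵐ[ν₁] k := by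
    filter_upwards [ae_restrict_mem measurableSet_Ioo] with t ht
    rw [hk t ht.1, hν₂]
    exact integral_congr_ae (Filter.Eventually.of_forall fun α => by
      simp only [hF, mul_div_assoc])
  have hker : IntegrableOn k (Ioo 0 T) := by
    have := hF_int.integral_prod_left
    exact this.congr hk_ae
  refine ⟨hker, ?_, ?_⟩
  · -- Fubini
    have hswap := integral_integral_swap (f := fun t α => F (t, α))
      (μ := ν₁) (ν := ν₂) (by exact hF_int)
    calc (∫ t in Ioo (0:ℝ) T, k t) = ∫ t, (∫ α, F (t, α) ∂ν₂) ∂ν₁ :=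
          (integral_congr_ae hk_ae).symm
      _ = ∫ α, (∫ t, F (t, α) ∂ν₁) ∂ν₂ := hswap
      _ = ∫ α in Ioo (0:ℝ) 1, T ^ (1 - α) * μ α / Real.Gamma (2 - α) := by
          rw [hν₂]
          exact setIntegral_congr_fun measurableSet_Ioo fun α hα => by
            rw [hν₁]; exact hval α hα
  · -- inequality
    have hL_int : Integrable (fun α => T ^ (1 - α) * μ α / Real.Gamma (2 - α)) ν₂ := by
      have hB := ((integrable_prod_iff' hFm).1 hF_int).2
      refine hB.congr ?_
      filter_upwards [ae_restrict_mem measurableSet_Ioo] with α hα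
      exact hnormval α hα
    have hR_int : Integrable (fun α => 2 * max 1 T * μ α) ν₂ :=
      hμ_int.const_mul _
    have hle : (∫ α in Ioo (0:ℝ) 1, T ^ (1 - α) * μ α / Real.Gamma (2 - α))
        ≤ ∫ α in Ioo (0:ℝ) 1, 2 * max 1 T * μ α := by
      refine integral_mono_ae hL_int hR_int ?_
      filter_upwards [ae_restrict_mem measurableSet_Ioo] with α hα
      exact hvb α hα
    rwa [integral_const_mul] at hle
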